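/- Let H be a finite connected simple graph, V a set of vertices of H, and c ∈ V a vertex of degree 2 in H. Let (P₁,P₂) be a pair of disjoint sets with P₁ ∪ P₂ = V such that each of P₁ and P₂ contains at least one vertex of V ∖ {c}, and let (ψ, φ) be an admissible pair of H for (P₁,P₂). Then of the two edges of H incident to c, exactly one lies in ψ and exactly one lies in φ; and the pair (ψ′, φ′) obtained from (ψ, φ) by exchanging these two edges between the two parts is again an admissible pair of H for some pair of disjoint sets covering V, namely either for (P₁,P₂) itself or for the pair obtained from (P₁,P₂) by moving c to the other part. -/

import Mathlib

namespace C2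

open SimpleGraph

variable {V : Type*}

/-- `ψ` is the edge set of a spanning tree of `H`. -/
def IsSpanningTree (H : SimpleGraph V) (ψ : Set (Sym2 V)) : Prop :=
  ψ ⊆ H.edgeSet ∧ (fromEdgeSet ψ).Connected ∧ (fromEdgeSet ψ).IsAcyclic

/-- `φ` is a spanning 2-forest of `H` compatible with `(P₁, P₂)`. -/
def IsSpanning2Forest (H : SimpleGraph V) (P₁ P₂ : Set V) (φ : Set (Sym2 V)) : Prop :=
  φ ⊆ H.edgeSet ∧ (fromEdgeSet φ).IsAcyclic ∧
    ∃ C₁ C₂ : (fromEdgeSet φ).ConnectedComponent, C₁ ≠ C₂ ∧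
      (∀ C : (fromEdgeSet φ).ConnectedComponent, C = C₁ ∨ C = C₂) ∧
      (∀ u ∈ P₁, (fromEdgeSet φ).connectedComponentMk u = C₁) ∧
      (∀ u ∈ P₂, (fromEdgeSet φ).connectedComponentMk u = C₂)

/-- `(ψ, φ)` is an admissible pair of `H` for `(P₁, P₂)`. -/
def AdmissiblePair (H : SimpleGraph V) (P₁ P₂ : Set V) (ψ φ : Set (Sym2 V)) : Prop :=
  Disjoint ψ φ ∧ ψ ∪ φ = H.edgeSet ∧ IsSpanningTree H ψ ∧ IsSpanning2Forest H P₁ P₂ φ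



private lemma isAcyclic_anti {G G' : SimpleGraph V} (h : G ≤ G') (hG' : G'.IsAcyclic) :
    G.IsAcyclic := fun _ w hw => hG' (w.mapLe h) (hw.mapLe h)

private lemma unique_nbr {H : SimpleGraph V} {S : Set (Sym2 V)} {c a b : V}
    (hS : S ⊆ H.edgeSet) (hnbr : H.neighborSet c = {a, b}) (hb : s(c, b) ∉ S) :
    ∀ d, (fromEdgeSet S).Adj c d → d = a := by
  intro d hd
  rw [fromEdgeSet_adj] at hd
  have hHd : H.Adj c d := (H.mem_edgeSet).mp (hS hd.1)
  have hmem : d ∈ H.neighborSet c := hHd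
  rw [hnbr] at hmem
  rcases hmem with rfl | rfl
  · rfl
  · exact absurd hd.1 hb

private lemma exists_walk_avoid {G : SimpleGraph V} {c a : V}
    (hca : ∀ d, G.Adj c d → d = a) :
    ∀ (n : ℕ) {u v : V}, u ≠ c → v ≠ c → ∀ w : G.Walk u v, w.length ≤ n →
      ∃ w' : G.Walk u v, c ∉ w'.support := by
  intro n
  induction n with
  | zero =>
    intro u v hu hv w hw
    cases w with
    | nil => exact ⟨Walk.nil, by simp [Ne.symm hu]⟩
    | cons h p => simp [Walk.length_cons] at hw
  | succ n ih =>
    intro u v hu hv w hw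
    cases w with
    | nil => exact ⟨Walk.nil, by simp [Ne.symm hu]⟩
    | cons h p =>
      rename_i x
      by_cases hx : x = c
      · subst hx
        have hua : u = a := hca u h.symm
        cases p with
        | nil => exact absurd rfl hv
        | cons h2 q =>
          rename_i y
          have hyu : y = u := (hca y h2).trans hua.symm
          subst hyu
          refine ih hu hv q ?_
          simp only [Walk.length_cons] at hw
          omega
      · obtain ⟨w', hw'⟩ := ih hx hv p (by simp only [Walk.length_cons] at hw; omega)
        refine ⟨Walk.cons h w', ?_⟩
        simp only [Walk.support_cons, List.mem_cons, not_or]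
        exact ⟨Ne.symm hu, hw'⟩

private lemma edges_mem_of_avoid {S T : Set (Sym2 V)} {c : V}
    (hST : ∀ e ∈ S, c ∉ e → e ∈ T) {u v : V}
    (w : (fromEdgeSet S).Walk u v) (hc : c ∉ w.support) :
    ∀ e ∈ w.edges, e ∈ (fromEdgeSet T).edgeSet := by
  intro e he
  induction e using Sym2.ind with
  | _ x y =>
    have h1 : s(x, y) ∈ (fromEdgeSet S).edgeSet := w.edges_subset_edgeSet he
    rw [edgeSet_fromEdgeSet] at h1 ⊢
    refine ⟨hST _ h1.1 ?_, h1.2⟩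
    intro hce
    rcases Sym2.mem_iff.mp hce with rfl | rfl
    · exact hc (w.fst_mem_support_of_mem_edges he)
    · exact hc (w.snd_mem_support_of_mem_edges he)

private lemma not_cycle_through {G : SimpleGraph V} {c a : V}
    (hca : ∀ d, G.Adj c d → d = a) {v : V} {w : G.Walk v v}
    (hw : w.IsCycle) (hc : c ∈ w.support) : False := by
  classical
  have hw₂ := hw.rotate hc
  generalize w.rotate c hc = w₂ at hw₂
  cases w₂ with
  | nil => simpa using hw₂.three_le_length
  | cons h p =>
    rename_i x
    have hxa : x = a := hca x h
    have hnodup := hw₂.edges_nodup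
    rw [Walk.edges_cons] at hnodup
    have hlen : 3 ≤ p.length + 1 := by simpa using hw₂.three_le_length
    have hp : p.darts ≠ [] := by
      intro hnil
      have := p.length_darts
      rw [hnil] at this
      simp at this
      omega
    set d := p.darts.getLast hp with hd
    have hsnd : d.snd = c := by rw [hd, p.getLast_darts_eq_lastDart hp]; rfl
    have hdadj : G.Adj d.fst d.snd := d.adj
    rw [hsnd] at hdadj
    have hfst : d.fst = x := (hca d.fst hdadj.symm).trans hxa.symm
    have hmem : d.edge ∈ p.edges := List.mem_map_of_mem (List.getLast_mem hp)
    have hedge : d.edge = s(c, x) := by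
      rw [show d.edge = s(d.fst, d.snd) from rfl, hfst, hsnd, Sym2.eq_swap]
    rw [hedge] at hmem
    exact (List.nodup_cons.mp hnodup).1 hmem

private lemma reachable_avoid {S T : Set (Sym2 V)} {c a : V}
    (hca : ∀ d, (fromEdgeSet S).Adj c d → d = a)
    (hST : ∀ e ∈ S, c ∉ e → e ∈ T) {u v : V} (hu : u ≠ c) (hv : v ≠ c)
    (h : (fromEdgeSet S).Reachable u v) : (fromEdgeSet T).Reachable u v := by
  obtain ⟨w⟩ := h
  obtain ⟨w', hw'⟩ := exists_walk_avoid hca w.length hu hv w le_rfl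
  exact ⟨w'.transfer _ (edges_mem_of_avoid hST w' hw')⟩

private lemma acyclic_avoid {S T : Set (Sym2 V)} {c a : V}
    (hca : ∀ d, (fromEdgeSet S).Adj c d → d = a)
    (hST : ∀ e ∈ S, c ∉ e → e ∈ T)
    (hT : (fromEdgeSet T).IsAcyclic) : (fromEdgeSet S).IsAcyclic := by
  intro v w hw
  by_cases hc : c ∈ w.support
  · exact not_cycle_through hca hw hc
  · exact hT (w.transfer _ (edges_mem_of_avoid hST w hc)) (hw.transfer _)

private lemma exists_adj_of_reachable_ne {G : SimpleGraph V} {x y : V}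
    (h : G.Reachable x y) (hxy : x ≠ y) : ∃ d, G.Adj x d := by
  obtain ⟨w⟩ := h
  cases w with
  | nil => exact absurd rfl hxy
  | cons h p => exact ⟨_, h⟩

private lemma incSet_eq {H : SimpleGraph V} {c a b : V}
    (hnbr : H.neighborSet c = {a, b}) :
    H.incidenceSet c = {s(c, a), s(c, b)} := by
  have ha : H.Adj c a := by
    have : a ∈ H.neighborSet c := by rw [hnbr]; exact Or.inl rfl
    exact this
  have hb : H.Adj c b := by
    have : b ∈ H.neighborSet c := by rw [hnbr]; exact Or.inr rfl
    exact this
  ext e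
  induction e using Sym2.ind with
  | _ x y =>
    constructor
    · rintro ⟨hxy, hce⟩
      rw [mem_edgeSet] at hxy
      rcases Sym2.mem_iff.mp hce with rfl | rfl
      · have : y ∈ H.neighborSet c := hxy
        rw [hnbr] at this
        rcases this with rfl | rfl
        · exact Or.inl rfl
        · exact Or.inr rfl
      · have : x ∈ H.neighborSet c := hxy.symm
        rw [hnbr] at this
        rcases this with rfl | rfl
        · exact Or.inl (Sym2.eq_swap)
        · exact Or.inr (Sym2.eq_swap)
    · rintro (h | h) <;> rw [h]
      · exact ⟨ha, Sym2.mem_mk_left c a⟩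
      · exact ⟨hb, Sym2.mem_mk_left c b⟩


private lemma key {H : SimpleGraph V} {c a b : V}
    (hnbr : H.neighborSet c = {a, b}) (hab : a ≠ b)
    {P₁ P₂ : Set V} (hdisj : Disjoint P₁ P₂) (hcP : c ∈ P₁ ∪ P₂)
    (h1 : (P₁ \ {c}).Nonempty) (h2 : (P₂ \ {c}).Nonempty)
    {ψ φ : Set (Sym2 V)} (hadm : AdmissiblePair H P₁ P₂ ψ φ)
    (he₁ : s(c, a) ∈ ψ) (he₂ : s(c, b) ∈ φ) :
    AdmissiblePair H P₁ P₂ ((ψ \ {s(c, a)}) ∪ {s(c, b)}) ((φ \ {s(c, b)}) ∪ {s(c, a)}) ∨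
      AdmissiblePair H (symmDiff P₁ {c}) (symmDiff P₂ {c})
        ((ψ \ {s(c, a)}) ∪ {s(c, b)}) ((φ \ {s(c, b)}) ∪ {s(c, a)}) := by
  obtain ⟨hdisj0, huni0, ⟨hψsub, hψconn, hψacy⟩, hφsub, hφacy, C₁, C₂, hC12, hCall, hP₁, hP₂⟩ :=
    hadm
  obtain ⟨u₁, hu₁P, hu₁c⟩ := h1
  obtain ⟨u₂, hu₂P, hu₂c⟩ := h2
  rw [Set.mem_singleton_iff] at hu₁c hu₂c
  have haH : H.Adj c a := by
    have : a ∈ H.neighborSet c := by rw [hnbr]; exact Or.inl rfl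
    exact this
  have hbH : H.Adj c b := by
    have : b ∈ H.neighborSet c := by rw [hnbr]; exact Or.inr rfl
    exact this
  have hac : a ≠ c := haH.ne'
  have hbc : b ≠ c := hbH.ne'
  have hee : s(c, a) ≠ s(c, b) := by
    intro h
    rw [Sym2.eq_iff] at h
    rcases h with ⟨-, h⟩ | ⟨h1', h2'⟩
    · exact hab h
    · exact hab (h2'.trans h1')
  have he₁φ : s(c, a) ∉ φ := Set.disjoint_left.mp hdisj0 he₁
  have he₂ψ : s(c, b) ∉ ψ := fun h => Set.disjoint_left.mp hdisj0 h he₂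
  set ψ' := (ψ \ {s(c, a)}) ∪ {s(c, b)} with hψ'def
  set φ' := (φ \ {s(c, b)}) ∪ {s(c, a)} with hφ'def
  have hcψ : ∀ d, (fromEdgeSet ψ).Adj c d → d = a := unique_nbr hψsub hnbr he₂ψ
  have hcφ : ∀ d, (fromEdgeSet φ).Adj c d → d = b :=
    unique_nbr hφsub (by rw [hnbr, Set.pair_comm]) he₁φ
  have hψ'sub : ψ' ⊆ H.edgeSet := by
    rintro x (⟨hx, -⟩ | hx)
    · exact hψsub hx
    · rw [Set.mem_singleton_iff] at hx; exact hx ▸ hφsub he₂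
  have hφ'sub : φ' ⊆ H.edgeSet := by
    rintro x (⟨hx, -⟩ | hx)
    · exact hφsub hx
    · rw [Set.mem_singleton_iff] at hx; exact hx ▸ hψsub he₁
  have he₁ψ' : s(c, a) ∉ ψ' := by
    rintro (⟨-, h⟩ | h)
    · exact h rfl
    · exact hee h
  have he₂φ' : s(c, b) ∉ φ' := by
    rintro (⟨-, h⟩ | h)
    · exact h rfl
    · exact hee h.symm
  have hcψ' : ∀ d, (fromEdgeSet ψ').Adj c d → d = b :=
    unique_nbr hψ'sub (by rw [hnbr, Set.pair_comm]) he₁ψ'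
  have hcφ' : ∀ d, (fromEdgeSet φ').Adj c d → d = a := unique_nbr hφ'sub hnbr he₂φ'
  have hψψ' : ∀ e ∈ ψ, c ∉ e → e ∈ ψ' := by
    intro e he hce
    exact Or.inl ⟨he, fun h => hce (h ▸ Sym2.mem_mk_left c a)⟩
  have hφφ' : ∀ e ∈ φ, c ∉ e → e ∈ φ' := by
    intro e he hce
    exact Or.inl ⟨he, fun h => hce (h ▸ Sym2.mem_mk_left c b)⟩
  have hψ'ψ : ∀ e ∈ ψ', c ∉ e → e ∈ ψ := by
    rintro e (⟨he, -⟩ | he) hce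
    · exact he
    · exact absurd (he ▸ Sym2.mem_mk_left c b) hce
  have hφ'φ : ∀ e ∈ φ', c ∉ e → e ∈ φ := by
    rintro e (⟨he, -⟩ | he) hce
    · exact he
    · exact absurd (he ▸ Sym2.mem_mk_left c a) hce
  have hψ'acy : (fromEdgeSet ψ').IsAcyclic := acyclic_avoid hcψ' hψ'ψ hψacy
  have hφ'acy : (fromEdgeSet φ').IsAcyclic := acyclic_avoid hcφ' hφ'φ hφacy
  -- connectivity of ψ'
  have hbψ' : (fromEdgeSet ψ').Adj c b := (fromEdgeSet_adj _).mpr ⟨Or.inr rfl, hbc.symm⟩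
  have hreachψ' : ∀ x, x ≠ c → (fromEdgeSet ψ').Reachable x u₁ := fun x hx =>
    reachable_avoid hcψ hψψ' hx hu₁c (hψconn.preconnected x u₁)
  have hreachψ'all : ∀ x, (fromEdgeSet ψ').Reachable x u₁ := by
    intro x
    by_cases hx : x = c
    · exact hx ▸ (hbψ'.reachable.trans (hreachψ' b hbc))
    · exact hreachψ' x hx
  have hψ'conn : (fromEdgeSet ψ').Connected := by
    rw [connected_iff]
    exact ⟨fun x y => (hreachψ'all x).trans (hreachψ'all y).symm, ⟨u₁⟩⟩
  have hψ'tree : IsSpanningTree H ψ' := ⟨hψ'sub, hψ'conn, hψ'acy⟩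
  -- disjointness and union
  have hdisj' : Disjoint ψ' φ' := by
    rw [Set.disjoint_left]
    rintro x (⟨hx, hx1⟩ | hx)
    · rintro (⟨hf, -⟩ | hf)
      · exact Set.disjoint_left.mp hdisj0 hx hf
      · exact hx1 (hf.trans rfl ▸ hf)
    · rw [Set.mem_singleton_iff] at hx
      rintro (⟨-, hf⟩ | hf)
      · exact hf hx
      · exact hee ((hx ▸ hf : x = s(c, a)) ▸ hx ▸ rfl)
  have huni' : ψ' ∪ φ' = H.edgeSet := by
    rw [← huni0]
    ext x
    simp only [hψ'def, hφ'def, Set.mem_union, Set.mem_diff, Set.mem_singleton_iff]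
    constructor
    · rintro ((⟨h, -⟩ | rfl) | (⟨h, -⟩ | rfl))
      exacts [Or.inl h, Or.inr he₂, Or.inr h, Or.inl he₁]
    · rintro (h | h)
      · by_cases hx : x = s(c, a)
        · exact Or.inr (Or.inr hx)
        · exact Or.inl (Or.inl ⟨h, hx⟩)
      · by_cases hx : x = s(c, b)
        · exact Or.inl (Or.inr hx)
        · exact Or.inr (Or.inl ⟨h, hx⟩)
  -- components of φ'
  have fwd : ∀ {x y : V}, x ≠ c → y ≠ c → (fromEdgeSet φ).Reachable x y →
      (fromEdgeSet φ').Reachable x y := fun hx hy h => reachable_avoid hcφ hφφ' hx hy h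
  have bwd : ∀ {x y : V}, x ≠ c → y ≠ c → (fromEdgeSet φ').Reachable x y →
      (fromEdgeSet φ).Reachable x y := fun hx hy h => reachable_avoid hcφ' hφ'φ hx hy h
  set C₁' := (fromEdgeSet φ').connectedComponentMk u₁ with hC₁'def
  set C₂' := (fromEdgeSet φ').connectedComponentMk u₂ with hC₂'def
  have hne' : C₁' ≠ C₂' := by
    intro h
    have hr := bwd hu₁c hu₂c (ConnectedComponent.exact h)
    exact hC12 (by rw [← hP₁ u₁ hu₁P, ← hP₂ u₂ hu₂P]; exact ConnectedComponent.sound hr)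
  have hmk₁ : ∀ u ∈ P₁, u ≠ c → (fromEdgeSet φ').connectedComponentMk u = C₁' := by
    intro u hu huc
    exact ConnectedComponent.sound (fwd huc hu₁c
      (ConnectedComponent.exact (by rw [hP₁ u hu, hP₁ u₁ hu₁P])))
  have hmk₂ : ∀ u ∈ P₂, u ≠ c → (fromEdgeSet φ').connectedComponentMk u = C₂' := by
    intro u hu huc
    exact ConnectedComponent.sound (fwd huc hu₂c
      (ConnectedComponent.exact (by rw [hP₂ u hu, hP₂ u₂ hu₂P])))
  have hcadj' : (fromEdgeSet φ').Adj c a := (fromEdgeSet_adj _).mpr ⟨Or.inr rfl, hac.symm⟩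
  have hallmk' : ∀ v : V, v ≠ c → (fromEdgeSet φ').connectedComponentMk v = C₁' ∨
      (fromEdgeSet φ').connectedComponentMk v = C₂' := by
    intro v hvc
    rcases hCall ((fromEdgeSet φ).connectedComponentMk v) with h | h
    · exact Or.inl (ConnectedComponent.sound (fwd hvc hu₁c
        (ConnectedComponent.exact (by rw [h, hP₁ u₁ hu₁P]))))
    · exact Or.inr (ConnectedComponent.sound (fwd hvc hu₂c
        (ConnectedComponent.exact (by rw [h, hP₂ u₂ hu₂P]))))
  have hmkc_or : (fromEdgeSet φ').connectedComponentMk c = C₁' ∨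
      (fromEdgeSet φ').connectedComponentMk c = C₂' := by
    rw [ConnectedComponent.connectedComponentMk_eq_of_adj hcadj']
    exact hallmk' a hac
  have hallC : ∀ C : (fromEdgeSet φ').ConnectedComponent, C = C₁' ∨ C = C₂' := by
    intro C
    induction C using SimpleGraph.ConnectedComponent.ind with
    | _ v =>
      by_cases hvc : v = c
      · exact hvc ▸ hmkc_or
      · exact hallmk' v hvc
  have h2f : ∀ (Q₁ Q₂ : Set V) (D₁ D₂ : (fromEdgeSet φ').ConnectedComponent), D₁ ≠ D₂ →
      (∀ C, C = D₁ ∨ C = D₂) → (∀ u ∈ Q₁, (fromEdgeSet φ').connectedComponentMk u = D₁) →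
      (∀ u ∈ Q₂, (fromEdgeSet φ').connectedComponentMk u = D₂) →
      IsSpanning2Forest H Q₁ Q₂ φ' :=
    fun _ _ D₁ D₂ hD hall hQ₁ hQ₂ => ⟨hφ'sub, hφ'acy, D₁, D₂, hD, hall, hQ₁, hQ₂⟩
  have hc₁₂ : (c ∈ P₁ ∧ c ∉ P₂) ∨ (c ∈ P₂ ∧ c ∉ P₁) := by
    rcases hcP with h | h
    · exact Or.inl ⟨h, Set.disjoint_left.mp hdisj h⟩
    · exact Or.inr ⟨h, Set.disjoint_right.mp hdisj h⟩
  rcases hmkc_or with hmkc | hmkc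
  · rcases hc₁₂ with ⟨hcin, hcout⟩ | ⟨hcin, hcout⟩
    · left
      refine ⟨hdisj', huni', hψ'tree, h2f P₁ P₂ C₁' C₂' hne' hallC ?_ ?_⟩
      · intro u hu
        rcases eq_or_ne u c with rfl | h
        · exact hmkc
        · exact hmk₁ u hu h
      · exact fun u hu => hmk₂ u hu (fun h => hcout (h ▸ hu))
    · right
      refine ⟨hdisj', huni', hψ'tree, h2f _ _ C₁' C₂' hne' hallC ?_ ?_⟩
      · intro u hu
        rw [Set.mem_symmDiff] at hu
        rcases hu with ⟨hu, -⟩ | ⟨hu, -⟩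
        · exact hmk₁ u hu (fun h => hcout (h ▸ hu))
        · rw [Set.mem_singleton_iff] at hu
          exact hu ▸ hmkc
      · intro u hu
        rw [Set.mem_symmDiff] at hu
        rcases hu with ⟨hu, hnc⟩ | ⟨hu, hnc⟩
        · exact hmk₂ u hu (fun h => hnc (Set.mem_singleton_iff.mpr h))
        · rw [Set.mem_singleton_iff] at hu
          exact absurd (hu ▸ hcin) hnc
  · rcases hc₁₂ with ⟨hcin, hcout⟩ | ⟨hcin, hcout⟩
    · right
      refine ⟨hdisj', huni', hψ'tree, h2f _ _ C₁' C₂' hne' hallC ?_ ?_⟩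
      · intro u hu
        rw [Set.mem_symmDiff] at hu
        rcases hu with ⟨hu, hnc⟩ | ⟨hu, hnc⟩
        · exact hmk₁ u hu (fun h => hnc (Set.mem_singleton_iff.mpr h))
        · rw [Set.mem_singleton_iff] at hu
          exact absurd (hu ▸ hcin) hnc
      · intro u hu
        rw [Set.mem_symmDiff] at hu
        rcases hu with ⟨hu, -⟩ | ⟨hu, -⟩
        · exact hmk₂ u hu (fun h => hcout (h ▸ hu))
        · rw [Set.mem_singleton_iff] at hu
          exact hu ▸ hmkc
    · left
      refine ⟨hdisj', huni', hψ'tree, h2f P₁ P₂ C₁' C₂' hne' hallC ?_ ?_⟩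
      · exact fun u hu => hmk₁ u hu (fun h => hcout (h ▸ hu))
      · intro u hu
        rcases eq_or_ne u c with rfl | h
        · exact hmkc
        · exact hmk₂ u hu h

/-- swapping around a 2-valent vertex: let `H` be a finite connected
simple graph, `Vset` a set of vertices, `c ∈ Vset` a vertex of degree 2, `(P₁, P₂)` a
partition of `Vset` with each part containing a vertex other than `c`, and `(ψ, φ)` an
admissible pair of `H` for `(P₁, P₂)`.  Then exactly one of the two edges incident to
`c` lies in `ψ` and exactly one lies in `φ`, and swapping them gives an admissible pair
either for `(P₁, P₂)` itself or for the pair obtained by moving `c` to the other part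
(symmetric difference with `{c}`). -/
theorem swap_around_two_valent {V : Type*} [Fintype V]
    (H : SimpleGraph V) (hconn : H.Connected)
    (Vset : Set V) (c : V) (hc : c ∈ Vset) (hdeg : (H.neighborSet c).ncard = 2)
    (P₁ P₂ : Set V) (hdisj : Disjoint P₁ P₂) (hunion : P₁ ∪ P₂ = Vset)
    (h1 : (P₁ \ {c}).Nonempty) (h2 : (P₂ \ {c}).Nonempty)
    (ψ φ : Set (Sym2 V)) (hadm : AdmissiblePair H P₁ P₂ ψ φ) :
    ∃ e₁ e₂ : Sym2 V, e₁ ≠ e₂ ∧ H.incidenceSet c = {e₁, e₂} ∧ e₁ ∈ ψ ∧ e₂ ∈ φ ∧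
      (AdmissiblePair H P₁ P₂ ((ψ \ {e₁}) ∪ {e₂}) ((φ \ {e₂}) ∪ {e₁}) ∨
        AdmissiblePair H (symmDiff P₁ {c}) (symmDiff P₂ {c})
          ((ψ \ {e₁}) ∪ {e₂}) ((φ \ {e₂}) ∪ {e₁})) := by
  obtain ⟨a, b, hab, hnbr⟩ := Set.ncard_eq_two.mp hdeg
  have hcP : c ∈ P₁ ∪ P₂ := by rw [hunion]; exact hc
  obtain ⟨hdisj0, huni0, ⟨hψsub, hψconn, hψacy⟩, hφsub, hφacy, C₁, C₂, hC12, hCall, hP₁, hP₂⟩ :=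
    hadm
  have hadm' : AdmissiblePair H P₁ P₂ ψ φ :=
    ⟨hdisj0, huni0, ⟨hψsub, hψconn, hψacy⟩, hφsub, hφacy, C₁, C₂, hC12, hCall, hP₁, hP₂⟩
  obtain ⟨u₁, hu₁P, hu₁c⟩ := h1
  obtain ⟨u₂, hu₂P, hu₂c⟩ := h2
  rw [Set.mem_singleton_iff] at hu₁c hu₂c
  have hinc : H.incidenceSet c = {s(c, a), s(c, b)} := incSet_eq hnbr
  have hee : s(c, a) ≠ s(c, b) := by
    intro h
    rw [Sym2.eq_iff] at h
    rcases h with ⟨-, h⟩ | ⟨h1', h2'⟩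
    · exact hab h
    · exact hab (h2'.trans h1')
  have hedge_cases : ∀ {S : Set (Sym2 V)}, S ⊆ H.edgeSet → ∀ {d : V},
      (fromEdgeSet S).Adj c d → s(c, a) ∈ S ∨ s(c, b) ∈ S := by
    intro S hS d hd
    rw [fromEdgeSet_adj] at hd
    have : d ∈ H.neighborSet c := (H.mem_edgeSet).mp (hS hd.1)
    rw [hnbr] at this
    rcases this with rfl | rfl
    · exact Or.inl hd.1
    · exact Or.inr hd.1
  -- at least one incident edge in ψ
  have hψedge : s(c, a) ∈ ψ ∨ s(c, b) ∈ ψ := by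
    rcases exists_adj_of_reachable_ne (hψconn.preconnected c u₁) (fun h => hu₁c h.symm) with
      ⟨d, hd⟩
    exact hedge_cases hψsub hd
  -- at least one incident edge in φ
  have hφedge : s(c, a) ∈ φ ∨ s(c, b) ∈ φ := by
    have hreach : ∃ u, u ≠ c ∧ (fromEdgeSet φ).Reachable c u := by
      rcases hcP with h | h
      · exact ⟨u₁, hu₁c, ConnectedComponent.exact
          (by rw [hP₁ c h, hP₁ u₁ hu₁P])⟩
      · exact ⟨u₂, hu₂c, ConnectedComponent.exact
          (by rw [hP₂ c h, hP₂ u₂ hu₂P])⟩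
    obtain ⟨u, huc, hr⟩ := hreach
    rcases exists_adj_of_reachable_ne hr (fun h => huc h.symm) with ⟨d, hd⟩
    exact hedge_cases hφsub hd
  rcases hψedge with hψe | hψe
  · have hφe : s(c, b) ∈ φ := by
      rcases hφedge with h | h
      · exact absurd h (Set.disjoint_left.mp hdisj0 hψe)
      · exact h
    exact ⟨s(c, a), s(c, b), hee, hinc, hψe, hφe,
      key hnbr hab hdisj hcP ⟨u₁, hu₁P, hu₁c⟩ ⟨u₂, hu₂P, hu₂c⟩ hadm' hψe hφe⟩
  · have hφe : s(c, a) ∈ φ := by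
      rcases hφedge with h | h
      · exact h
      · exact absurd h (Set.disjoint_left.mp hdisj0 hψe)
    refine ⟨s(c, b), s(c, a), hee.symm, by rw [hinc, Set.pair_comm], hψe, hφe, ?_⟩
    exact key (by rw [hnbr, Set.pair_comm]) hab.symm hdisj hcP ⟨u₁, hu₁P, hu₁c⟩
      ⟨u₂, hu₂P, hu₂c⟩ hadm' hψe hφe


end C2
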